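/- arXiv:0802.0446 — 2 statements merged into one kernel-verified Lean document; each statement's English description precedes it below -/
import Mathlib

section
/- Let V ∈ L¹(ℝ³) be real-valued and let u ∈ L²(Ω_μ) where Ω_μ is the sphere of radius √μ in ℝ³. Define φ̂(p) = (2π)^{−3/2} ∫_{Ω_μ} V̂(p−q) u(q) dω(q). Then the spherical average r ↦ ∫_{S²} |φ̂(rω)|² dΩ(ω) is Lipschitz continuous in r on [0, ∞). -/
open MeasureTheory Real

noncomputable section

/-- The Fourier transform with the convention `V̂(p) = (2π)^{-3/2} ∫ V(x) e^{-i p·x} dx`. -/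
def paperFT (V : EuclideanSpace ℝ (Fin 3) → ℝ) (p : EuclideanSpace ℝ (Fin 3)) : ℂ :=
  (((2 * π) ^ (-(3 : ℝ) / 2) : ℝ) : ℂ) *
    ∫ x, Complex.exp (-Complex.I * ((inner ℝ x p : ℝ) : ℂ)) * (V x : ℂ)

lemma lipsin (a b : ℝ) : |Real.sin a - Real.sin b| ≤ |a - b| := by
  rw [Real.sin_sub_sin, abs_mul, abs_mul, abs_two]
  have h1 : |Real.sin ((a - b) / 2)| ≤ |(a - b) / 2| := Real.abs_sin_le_abs
  have h2 : |Real.cos ((a + b) / 2)| ≤ 1 := Real.abs_cos_le_one _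
  have h3 : |(a - b) / 2| = |a - b| / 2 := by rw [abs_div, abs_two]
  nlinarith [abs_nonneg (Real.sin ((a - b) / 2)), abs_nonneg (a - b)]

lemma lipcos (a b : ℝ) : |Real.cos a - Real.cos b| ≤ |a - b| := by
  rw [Real.cos_sub_cos, abs_mul, abs_mul, abs_neg, abs_two]
  have h1 : |Real.sin ((a - b) / 2)| ≤ |(a - b) / 2| := Real.abs_sin_le_abs
  have h2 : |Real.sin ((a + b) / 2)| ≤ 1 := Real.abs_sin_le_one _
  have h3 : |(a - b) / 2| = |a - b| / 2 := by rw [abs_div, abs_two]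
  nlinarith [abs_nonneg (Real.sin ((a - b) / 2)), abs_nonneg (a - b)]

lemma exp_neg_I (x : ℝ) : Complex.exp (-Complex.I * x)
    = (Real.cos x : ℂ) - (Real.sin x : ℂ) * Complex.I := by
  have h : (-Complex.I * x) = ((-x : ℝ) : ℂ) * Complex.I := by push_cast; ring
  rw [h, Complex.exp_mul_I, ← Complex.ofReal_cos, ← Complex.ofReal_sin]
  push_cast [Real.cos_neg, Real.sin_neg]
  ring

lemma expdiff (a b : ℝ) :
    ‖Complex.exp (-Complex.I * a) - Complex.exp (-Complex.I * b)‖ ≤ 2 * |a - b| := by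
  rw [exp_neg_I, exp_neg_I]
  have h : (Real.cos a : ℂ) - (Real.sin a : ℂ) * Complex.I
      - ((Real.cos b : ℂ) - (Real.sin b : ℂ) * Complex.I)
      = ((Real.cos a - Real.cos b : ℝ) : ℂ)
        + ((-(Real.sin a - Real.sin b) : ℝ) : ℂ) * Complex.I := by push_cast; ring
  rw [h]
  calc ‖((Real.cos a - Real.cos b : ℝ) : ℂ)
        + ((-(Real.sin a - Real.sin b) : ℝ) : ℂ) * Complex.I‖
      ≤ ‖((Real.cos a - Real.cos b : ℝ) : ℂ)‖
        + ‖((-(Real.sin a - Real.sin b) : ℝ) : ℂ) * Complex.I‖ := norm_add_le _ _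
    _ ≤ |a - b| + |a - b| := by
        rw [norm_mul, Complex.norm_real, Complex.norm_real, Complex.norm_I, mul_one,
          Real.norm_eq_abs, Real.norm_eq_abs, abs_neg]
        exact add_le_add (lipcos a b) (lipsin a b)
    _ = 2 * |a - b| := by ring


def sphParam (R : ℝ) (p : ℝ × ℝ) : EuclideanSpace ℝ (Fin 3) :=
  (WithLp.equiv 2 (Fin 3 → ℝ)).symm
    ![R * (Real.sin p.1 * Real.cos p.2), R * (Real.sin p.1 * Real.sin p.2), R * Real.cos p.1]

lemma sincos_diff (a b a' b' : ℝ) (f : ℝ → ℝ) (hf : ∀ x y, |f x - f y| ≤ |x - y|)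
    (hfb : ∀ x, |f x| ≤ 1) :
    |Real.sin a * f b - Real.sin a' * f b'| ≤ |a - a'| + |b - b'| := by
  have h : Real.sin a * f b - Real.sin a' * f b'
      = (Real.sin a - Real.sin a') * f b + Real.sin a' * (f b - f b') := by ring
  rw [h]
  calc |(Real.sin a - Real.sin a') * f b + Real.sin a' * (f b - f b')|
      ≤ |(Real.sin a - Real.sin a') * f b| + |Real.sin a' * (f b - f b')| := abs_add_le _ _
    _ = |Real.sin a - Real.sin a'| * |f b| + |Real.sin a'| * |f b - f b'| := by
        rw [abs_mul, abs_mul]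
    _ ≤ |a - a'| * 1 + 1 * |b - b'| := by
        have hsa := lipsin a a'
        have hsb := hf b b'
        have h1 := hfb b
        have h2 := Real.abs_sin_le_one a'
        nlinarith [abs_nonneg (Real.sin a - Real.sin a'), abs_nonneg (f b - f b'),
          abs_nonneg (f b), abs_nonneg (Real.sin a')]
    _ = |a - a'| + |b - b'| := by ring

lemma sphParam_lip (R : ℝ) (hR : 0 < R) :
    LipschitzWith ⟨4 * R, by positivity⟩ (sphParam R) := by
  apply LipschitzWith.of_dist_le_mul
  intro p q
  have hd1 : |p.1 - q.1| ≤ dist p q := by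
    rw [← Real.dist_eq, Prod.dist_eq]; exact le_max_left _ _
  have hd2 : |p.2 - q.2| ≤ dist p q := by
    rw [← Real.dist_eq, Prod.dist_eq]; exact le_max_right _ _
  have hd0 : (0:ℝ) ≤ dist p q := dist_nonneg
  set d := dist p q with hd
  -- coordinatewise bounds
  have h0 : |R * (Real.sin p.1 * Real.cos p.2) - R * (Real.sin q.1 * Real.cos q.2)| ≤ R * (2*d) := by
    rw [← mul_sub, abs_mul, abs_of_pos hR]
    have := sincos_diff p.1 p.2 q.1 q.2 Real.cos lipcos Real.abs_cos_le_one
    have h2 : |p.1 - q.1| + |p.2 - q.2| ≤ 2 * d := by linarith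
    nlinarith
  have h1 : |R * (Real.sin p.1 * Real.sin p.2) - R * (Real.sin q.1 * Real.sin q.2)| ≤ R * (2*d) := by
    rw [← mul_sub, abs_mul, abs_of_pos hR]
    have := sincos_diff p.1 p.2 q.1 q.2 Real.sin lipsin Real.abs_sin_le_one
    nlinarith
  have h2 : |R * Real.cos p.1 - R * Real.cos q.1| ≤ R * (2*d) := by
    rw [← mul_sub, abs_mul, abs_of_pos hR]
    have := lipcos p.1 q.1
    nlinarith
  rw [EuclideanSpace.dist_eq]
  have hsum : ∑ i, dist (sphParam R p i) (sphParam R q i) ^ 2 ≤ (4 * R * d) ^ 2 := by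
    rw [Fin.sum_univ_three]
    simp only [sphParam, WithLp.equiv_symm_apply, PiLp.toLp_apply, Matrix.cons_val_zero, Matrix.cons_val_one,
      Matrix.head_cons, Matrix.cons_val_two, Matrix.tail_cons]
    rw [Real.dist_eq, Real.dist_eq, Real.dist_eq]
    nlinarith [sq_abs (R * (Real.sin p.1 * Real.cos p.2) - R * (Real.sin q.1 * Real.cos q.2)),
      sq_abs (R * (Real.sin p.1 * Real.sin p.2) - R * (Real.sin q.1 * Real.sin q.2)),
      sq_abs (R * Real.cos p.1 - R * Real.cos q.1),
      abs_nonneg (R * (Real.sin p.1 * Real.cos p.2) - R * (Real.sin q.1 * Real.cos q.2)),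
      abs_nonneg (R * (Real.sin p.1 * Real.sin p.2) - R * (Real.sin q.1 * Real.sin q.2)),
      abs_nonneg (R * Real.cos p.1 - R * Real.cos q.1)]
  calc Real.sqrt (∑ i, dist (sphParam R p i) (sphParam R q i) ^ 2)
      ≤ Real.sqrt ((4 * R * d) ^ 2) := Real.sqrt_le_sqrt hsum
    _ = 4 * R * d := Real.sqrt_sq (by positivity)
    _ = (⟨4 * R, by positivity⟩ : NNReal) * d := by push_cast; ring


lemma sphere_subset (R : ℝ) (hR : 0 < R) :
    Metric.sphere (0 : EuclideanSpace ℝ (Fin 3)) R ⊆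
      sphParam R '' (Set.Icc 0 π ×ˢ Set.Icc (-π) π) := by
  intro v hv
  rw [mem_sphere_zero_iff_norm] at hv
  set a := v 0 with ha
  set b := v 1 with hb
  set c := v 2 with hc
  have hnorm : a ^ 2 + b ^ 2 + c ^ 2 = R ^ 2 := by
    have h := hv
    rw [EuclideanSpace.norm_eq] at h
    have h2 : ∑ i, ‖v i‖ ^ 2 = R ^ 2 := by
      rw [← h]; rw [Real.sq_sqrt]; positivity
    rw [Fin.sum_univ_three] at h2
    simpa [Real.norm_eq_abs, sq_abs] using h2
  have hcR : |c| ≤ R := by nlinarith [sq_abs c, abs_nonneg c]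
  have hc1 : -1 ≤ c / R := by rw [neg_le, ← neg_div, div_le_one hR]; cases abs_le.1 hcR; linarith
  have hc2 : c / R ≤ 1 := by rw [div_le_one hR]; exact (abs_le.1 hcR).2
  set z : ℂ := Complex.mk a b with hz  -- might not exist; use ofReal
  set θ := Real.arccos (c / R) with hθ
  set φ := Complex.arg z with hφ
  refine ⟨(θ, φ), ⟨⟨Real.arccos_nonneg _, Real.arccos_le_pi _⟩,
    ⟨(Complex.neg_pi_lt_arg z).le, Complex.arg_le_pi z⟩⟩, ?_⟩
  have hcosθ : Real.cos θ = c / R := Real.cos_arccos hc1 hc2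
  have hsinθ : R * Real.sin θ = ‖z‖ := by
    rw [hθ, Real.sin_arccos]
    have h1 : R * Real.sqrt (1 - (c / R) ^ 2) = Real.sqrt (R ^ 2 * (1 - (c / R) ^ 2)) := by
      rw [Real.sqrt_mul (by positivity), Real.sqrt_sq hR.le]
    rw [h1]
    have h2 : R ^ 2 * (1 - (c / R) ^ 2) = a ^ 2 + b ^ 2 := by
      field_simp
      nlinarith
    rw [h2, Complex.norm_def, Complex.normSq_mk]
    ring_nf
  have hre : z.re = a := rfl
  have him : z.im = b := rfl
  have h0 : R * (Real.sin θ * Real.cos φ) = a := by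
    rw [← mul_assoc, hsinθ, hφ, Complex.norm_mul_cos_arg, hre]
  have h1 : R * (Real.sin θ * Real.sin φ) = b := by
    rw [← mul_assoc, hsinθ, hφ, Complex.norm_mul_sin_arg, him]
  have h2 : R * Real.cos θ = c := by rw [hcosθ]; field_simp
  ext i
  fin_cases i
  · simpa [sphParam, WithLp.equiv_symm_apply, PiLp.toLp_apply] using h0.trans ha
  · simpa [sphParam, WithLp.equiv_symm_apply, PiLp.toLp_apply] using h1.trans hb
  · simpa [sphParam, WithLp.equiv_symm_apply, PiLp.toLp_apply] using h2.trans hc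


lemma sphere_hausdorff_lt_top (R : ℝ) (hR : 0 < R) :
    μH[2] (Metric.sphere (0 : EuclideanSpace ℝ (Fin 3)) R) < ⊤ := by
  have h1 := (sphParam_lip R hR).hausdorffMeasure_image_le (by norm_num : (0:ℝ) ≤ 2)
    (Set.Icc 0 π ×ˢ Set.Icc (-π) π)
  refine lt_of_le_of_lt (measure_mono (sphere_subset R hR)) (lt_of_le_of_lt h1 ?_)
  rw [hausdorffMeasure_prod_real]
  refine ENNReal.mul_lt_top ?_ ?_
  · exact ENNReal.rpow_lt_top_of_nonneg (by norm_num) ENNReal.coe_ne_top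
  · exact ((isCompact_Icc.prod isCompact_Icc).measure_lt_top)


/-- The convolution `φ̂`. -/
def phiHat (V : EuclideanSpace ℝ (Fin 3) → ℝ) (u : EuclideanSpace ℝ (Fin 3) → ℂ) (μ : ℝ)
    (p : EuclideanSpace ℝ (Fin 3)) : ℂ :=
  (((2 * π) ^ (-(3 : ℝ) / 2) : ℝ) : ℂ) *
    ∫ q in Metric.sphere (0 : EuclideanSpace ℝ (Fin 3)) (Real.sqrt μ),
      paperFT V (p - q) * u q ∂μH[2]

/-- For `V` real-valued with `V, |x|V ∈ L¹(ℝ³)` and `u ∈ L²(Ω_μ)` on the sphere `Ω_μ` of radius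
`√μ`, define `φ̂(p) = (2π)^{-3/2} ∫_{Ω_μ} V̂(p-q) u(q) dω(q)`. Then the spherical average
`r ↦ ∫_{S²} |φ̂(r ω)|² dΩ(ω)` is Lipschitz continuous on `[0, ∞)`. -/
theorem stmt4 (μ : ℝ) (hμ : 0 < μ)
    (V : EuclideanSpace ℝ (Fin 3) → ℝ)
    (hV : Integrable V)
    (hVx : Integrable (fun x => ‖x‖ * V x))
    (u : EuclideanSpace ℝ (Fin 3) → ℂ)
    (hu : MemLp u 2 ((μH[2]).restrict (Metric.sphere (0 : EuclideanSpace ℝ (Fin 3)) (Real.sqrt μ)))) :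
    ∃ L : NNReal, LipschitzOnWith L
      (fun r : ℝ => ∫ ω in Metric.sphere (0 : EuclideanSpace ℝ (Fin 3)) 1,
        ‖(((2 * π) ^ (-(3 : ℝ) / 2) : ℝ) : ℂ) *
          ∫ q in Metric.sphere (0 : EuclideanSpace ℝ (Fin 3)) (Real.sqrt μ),
            paperFT V (r • ω - q) * u q ∂μH[2]‖ ^ 2 ∂μH[2])
      (Set.Ici (0 : ℝ)) := by
  classical
  have hgoal : (fun r : ℝ => ∫ ω in Metric.sphere (0 : EuclideanSpace ℝ (Fin 3)) 1,
        ‖(((2 * π) ^ (-(3 : ℝ) / 2) : ℝ) : ℂ) *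
          ∫ q in Metric.sphere (0 : EuclideanSpace ℝ (Fin 3)) (Real.sqrt μ),
            paperFT V (r • ω - q) * u q ∂μH[2]‖ ^ 2 ∂μH[2])
      = (fun r : ℝ => ∫ ω in Metric.sphere (0 : EuclideanSpace ℝ (Fin 3)) 1,
          ‖phiHat V u μ (r • ω)‖ ^ 2 ∂μH[2]) := rfl
  rw [hgoal]
  set C0 : ℝ := (2 * π) ^ (-(3 : ℝ) / 2) with hC0
  have hπ : (0:ℝ) < 2 * π := by positivity
  have hC0pos : 0 < C0 := Real.rpow_pos_of_pos hπ _
  set J1 : ℝ := ∫ x, ‖‖x‖ * V x‖ with hJ1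
  set J0 : ℝ := ∫ x, ‖V x‖ with hJ0
  have hJ1nn : 0 ≤ J1 := integral_nonneg fun x => norm_nonneg _
  have hJ0nn : 0 ≤ J0 := integral_nonneg fun x => norm_nonneg _
  -- measurability and integrability of the Fourier integrand
  have hmeas : ∀ p : EuclideanSpace ℝ (Fin 3),
      Continuous fun x : EuclideanSpace ℝ (Fin 3) =>
        Complex.exp (-Complex.I * (((inner ℝ x p : ℝ)) : ℂ)) := fun p =>
    Complex.continuous_exp.comp (continuous_const.mul
      (Complex.continuous_ofReal.comp (continuous_id.inner continuous_const)))
  have hexp1 : ∀ t : ℝ, ‖Complex.exp (-Complex.I * (t : ℂ))‖ = 1 := by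
    intro t
    rw [show -Complex.I * (t : ℂ) = ((-t : ℝ) : ℂ) * Complex.I by push_cast; ring,
      Complex.norm_exp_ofReal_mul_I]
  have hgint : ∀ p : EuclideanSpace ℝ (Fin 3),
      Integrable (fun x => Complex.exp (-Complex.I * (((inner ℝ x p : ℝ)) : ℂ)) * (V x : ℂ)) := by
    intro p
    exact hV.ofReal.bdd_mul (hmeas p).aestronglyMeasurable (Filter.Eventually.of_forall fun x => le_of_eq (hexp1 _))
  -- Lipschitz bound for paperFT
  have ftlip : ∀ p p' : EuclideanSpace ℝ (Fin 3),
      ‖paperFT V p - paperFT V p'‖ ≤ C0 * (2 * J1) * ‖p - p'‖ := by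
    intro p p'
    rw [paperFT, paperFT, ← mul_sub, norm_mul, Complex.norm_real, Real.norm_eq_abs,
      abs_of_pos hC0pos, ← integral_sub (hgint p) (hgint p')]
    have hb : ∀ x : EuclideanSpace ℝ (Fin 3),
        ‖Complex.exp (-Complex.I * (((inner ℝ x p : ℝ)) : ℂ)) * (V x : ℂ)
          - Complex.exp (-Complex.I * (((inner ℝ x p' : ℝ)) : ℂ)) * (V x : ℂ)‖
        ≤ 2 * ‖p - p'‖ * ‖‖x‖ * V x‖ := by
      intro x
      rw [← sub_mul, norm_mul, Complex.norm_real]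
      have h1 := expdiff (inner ℝ x p : ℝ) (inner ℝ x p' : ℝ)
      have h2 : |(inner ℝ x p : ℝ) - (inner ℝ x p' : ℝ)| ≤ ‖x‖ * ‖p - p'‖ := by
        rw [← inner_sub_right]
        exact abs_real_inner_le_norm x (p - p')
      rw [norm_mul, norm_norm]
      have h3 : (0:ℝ) ≤ ‖V x‖ := norm_nonneg _
      nlinarith [norm_nonneg (Complex.exp (-Complex.I * (((inner ℝ x p : ℝ)) : ℂ))
        - Complex.exp (-Complex.I * (((inner ℝ x p' : ℝ)) : ℂ)))]
    calc C0 * ‖∫ x, (Complex.exp (-Complex.I * (((inner ℝ x p : ℝ)) : ℂ)) * (V x : ℂ)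
          - Complex.exp (-Complex.I * (((inner ℝ x p' : ℝ)) : ℂ)) * (V x : ℂ))‖
        ≤ C0 * ∫ x, ‖Complex.exp (-Complex.I * (((inner ℝ x p : ℝ)) : ℂ)) * (V x : ℂ)
          - Complex.exp (-Complex.I * (((inner ℝ x p' : ℝ)) : ℂ)) * (V x : ℂ)‖ := by
          exact mul_le_mul_of_nonneg_left (norm_integral_le_integral_norm _) hC0pos.le
      _ ≤ C0 * ∫ x, 2 * ‖p - p'‖ * ‖‖x‖ * V x‖ := by
          refine mul_le_mul_of_nonneg_left ?_ hC0pos.le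
          exact integral_mono ((hgint p).sub (hgint p')).norm
            ((hVx.norm.const_mul (2 * ‖p - p'‖))) hb
      _ = C0 * (2 * J1) * ‖p - p'‖ := by
          rw [integral_const_mul]; ring
  -- uniform bound for paperFT
  have ftbound : ∀ p : EuclideanSpace ℝ (Fin 3), ‖paperFT V p‖ ≤ C0 * J0 := by
    intro p
    rw [paperFT, norm_mul, Complex.norm_real, Real.norm_eq_abs, abs_of_pos hC0pos]
    refine mul_le_mul_of_nonneg_left ?_ hC0pos.le
    refine (norm_integral_le_integral_norm _).trans ?_
    refine integral_mono (hgint p).norm hV.norm fun x => ?_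
    rw [norm_mul, Complex.norm_real, hexp1, one_mul]
  have ftcont : Continuous (paperFT V) := by
    have h : LipschitzWith (Real.toNNReal (C0 * (2 * J1))) (paperFT V) := by
      apply LipschitzWith.of_dist_le_mul
      intro p p'
      rw [dist_eq_norm, dist_eq_norm, Real.coe_toNNReal _ (by positivity)]
      exact ftlip p p'
    exact h.continuous
  -- the measure on the sphere of radius √μ is finite
  set S : Set (EuclideanSpace ℝ (Fin 3)) := Metric.sphere 0 (Real.sqrt μ) with hS
  haveI : IsFiniteMeasure ((μH[2] : Measure (EuclideanSpace ℝ (Fin 3))).restrict S) :=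
    ⟨by rw [Measure.restrict_apply_univ]
        exact sphere_hausdorff_lt_top _ (Real.sqrt_pos.2 hμ)⟩
  have huint : Integrable u (μH[2].restrict S) := hu.integrable one_le_two
  set JU : ℝ := ∫ q, ‖u q‖ ∂(μH[2].restrict S) with hJU
  have hJUnn : 0 ≤ JU := integral_nonneg fun q => norm_nonneg _
  -- integrability of the φ̂ integrand
  have hqint : ∀ p : EuclideanSpace ℝ (Fin 3),
      Integrable (fun q => paperFT V (p - q) * u q) (μH[2].restrict S) := fun p =>
    huint.bdd_mul ((ftcont.comp (continuous_const.sub continuous_id)).aestronglyMeasurable)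
      (Filter.Eventually.of_forall fun q => ftbound _)
  -- Lipschitz bound for φ̂
  have Philip : ∀ p p' : EuclideanSpace ℝ (Fin 3),
      ‖phiHat V u μ p - phiHat V u μ p'‖ ≤ C0 * (C0 * (2 * J1) * JU) * ‖p - p'‖ := by
    intro p p'
    rw [phiHat, phiHat, ← mul_sub, norm_mul, Complex.norm_real, Real.norm_eq_abs,
      abs_of_pos hC0pos, ← integral_sub (hqint p) (hqint p')]
    have hb : ∀ q : EuclideanSpace ℝ (Fin 3),
        ‖paperFT V (p - q) * u q - paperFT V (p' - q) * u q‖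
          ≤ C0 * (2 * J1) * ‖p - p'‖ * ‖u q‖ := by
      intro q
      rw [← sub_mul, norm_mul]
      have h1 := ftlip (p - q) (p' - q)
      rw [show p - q - (p' - q) = p - p' by abel] at h1
      have h2 : (0:ℝ) ≤ ‖u q‖ := norm_nonneg _
      nlinarith [norm_nonneg (paperFT V (p - q) - paperFT V (p' - q))]
    calc C0 * ‖∫ q, (paperFT V (p - q) * u q - paperFT V (p' - q) * u q) ∂(μH[2].restrict S)‖
        ≤ C0 * ∫ q, ‖paperFT V (p - q) * u q - paperFT V (p' - q) * u q‖ ∂(μH[2].restrict S) :=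
          mul_le_mul_of_nonneg_left (norm_integral_le_integral_norm _) hC0pos.le
      _ ≤ C0 * ∫ q, C0 * (2 * J1) * ‖p - p'‖ * ‖u q‖ ∂(μH[2].restrict S) := by
          refine mul_le_mul_of_nonneg_left ?_ hC0pos.le
          exact integral_mono ((hqint p).sub (hqint p')).norm
            (huint.norm.const_mul _) hb
      _ = C0 * (C0 * (2 * J1) * JU) * ‖p - p'‖ := by
          rw [integral_const_mul]; ring
  -- uniform bound for φ̂
  have Phibound : ∀ p : EuclideanSpace ℝ (Fin 3),
      ‖phiHat V u μ p‖ ≤ C0 * (C0 * J0 * JU) := by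
    intro p
    rw [phiHat, norm_mul, Complex.norm_real, Real.norm_eq_abs, abs_of_pos hC0pos]
    refine mul_le_mul_of_nonneg_left ?_ hC0pos.le
    refine (norm_integral_le_integral_norm _).trans ?_
    have h := integral_mono (hqint p).norm (huint.norm.const_mul (C0 * J0)) fun q => by
      rw [norm_mul]
      exact mul_le_mul_of_nonneg_right (ftbound _) (norm_nonneg _)
    rw [integral_const_mul] at h
    exact h
  set LF : ℝ := C0 * (C0 * (2 * J1) * JU) with hLF
  set B : ℝ := C0 * (C0 * J0 * JU) with hB
  have hLFnn : 0 ≤ LF := by positivity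
  have hBnn : 0 ≤ B := by positivity
  have Phicont : Continuous (phiHat V u μ) := by
    have h : LipschitzWith (Real.toNNReal LF) (phiHat V u μ) := by
      apply LipschitzWith.of_dist_le_mul
      intro p p'
      rw [dist_eq_norm, dist_eq_norm, Real.coe_toNNReal _ hLFnn]
      exact Philip p p'
    exact h.continuous
  -- squared-norm difference bound
  have Gdiff : ∀ p p' : EuclideanSpace ℝ (Fin 3),
      |‖phiHat V u μ p‖ ^ 2 - ‖phiHat V u μ p'‖ ^ 2| ≤ 2 * B * LF * ‖p - p'‖ := by
    intro p p'
    have h1 : |‖phiHat V u μ p‖ - ‖phiHat V u μ p'‖| ≤ ‖phiHat V u μ p - phiHat V u μ p'‖ :=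
      abs_norm_sub_norm_le _ _
    have h2 := Philip p p'
    have h3 := Phibound p
    have h4 := Phibound p'
    have h5 : (0:ℝ) ≤ ‖phiHat V u μ p‖ := norm_nonneg _
    have h6 : (0:ℝ) ≤ ‖phiHat V u μ p'‖ := norm_nonneg _
    have key : ‖phiHat V u μ p‖ ^ 2 - ‖phiHat V u μ p'‖ ^ 2
        = (‖phiHat V u μ p‖ - ‖phiHat V u μ p'‖) * (‖phiHat V u μ p‖ + ‖phiHat V u μ p'‖) := by
      ring
    rw [abs_le]
    constructor <;> nlinarith [abs_nonneg (‖phiHat V u μ p‖ - ‖phiHat V u μ p'‖),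
      le_abs_self (‖phiHat V u μ p‖ - ‖phiHat V u μ p'‖),
      neg_abs_le (‖phiHat V u μ p‖ - ‖phiHat V u μ p'‖), norm_nonneg (p - p'),
      norm_nonneg (phiHat V u μ p - phiHat V u μ p')]
  -- finite measure on the unit sphere
  set S1 : Set (EuclideanSpace ℝ (Fin 3)) := Metric.sphere 0 1 with hS1
  haveI : IsFiniteMeasure ((μH[2] : Measure (EuclideanSpace ℝ (Fin 3))).restrict S1) :=
    ⟨by rw [Measure.restrict_apply_univ]
        exact sphere_hausdorff_lt_top _ one_pos⟩
  set M1 : ℝ := ((μH[2] : Measure (EuclideanSpace ℝ (Fin 3))).restrict S1 Set.univ).toReal with hM1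
  have hM1nn : 0 ≤ M1 := ENNReal.toReal_nonneg
  -- integrability of the outer integrand
  have hGint : ∀ r : ℝ, Integrable (fun ω => ‖phiHat V u μ (r • ω)‖ ^ 2)
      ((μH[2] : Measure (EuclideanSpace ℝ (Fin 3))).restrict S1) := by
    intro r
    refine Integrable.mono' (integrable_const (B ^ 2))
      ((Phicont.comp (continuous_const_smul r)).norm.pow 2).aestronglyMeasurable
      (Filter.Eventually.of_forall fun ω => ?_)
    rw [Real.norm_eq_abs, abs_of_nonneg (by positivity)]
    exact pow_le_pow_left₀ (norm_nonneg _) (Phibound _) 2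
  -- conclude
  refine ⟨Real.toNNReal (2 * B * LF * M1), ?_⟩
  rw [lipschitzOnWith_iff_dist_le_mul]
  intro r _ s _
  rw [Real.dist_eq, Real.dist_eq, Real.coe_toNNReal _ (by positivity)]
  have hae : ∀ ω ∈ S1, |‖phiHat V u μ (r • ω)‖ ^ 2 - ‖phiHat V u μ (s • ω)‖ ^ 2|
      ≤ 2 * B * LF * |r - s| := by
    intro ω hω
    have h := Gdiff (r • ω) (s • ω)
    have hn : ‖r • ω - s • ω‖ = |r - s| := by
      rw [← sub_smul, norm_smul, Real.norm_eq_abs, mem_sphere_zero_iff_norm.1 hω, mul_one]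
    rwa [hn] at h
  have hsub : (∫ ω in S1, ‖phiHat V u μ (r • ω)‖ ^ 2 ∂μH[2])
      - (∫ ω in S1, ‖phiHat V u μ (s • ω)‖ ^ 2 ∂μH[2])
      = ∫ ω in S1, (‖phiHat V u μ (r • ω)‖ ^ 2 - ‖phiHat V u μ (s • ω)‖ ^ 2) ∂μH[2] :=
    (integral_sub (hGint r) (hGint s)).symm
  rw [hsub]
  calc |∫ ω in S1, (‖phiHat V u μ (r • ω)‖ ^ 2 - ‖phiHat V u μ (s • ω)‖ ^ 2) ∂μH[2]|
      ≤ ∫ ω in S1, |‖phiHat V u μ (r • ω)‖ ^ 2 - ‖phiHat V u μ (s • ω)‖ ^ 2| ∂μH[2] := by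
        exact (Real.norm_eq_abs _) ▸ (norm_integral_le_integral_norm _).trans
          (le_of_eq (by simp [Real.norm_eq_abs]))
    _ ≤ ∫ _ω in S1, 2 * B * LF * |r - s| ∂μH[2] := by
        refine integral_mono_ae (((hGint r).sub (hGint s)).abs) (integrable_const _) ?_
        filter_upwards [ae_restrict_mem Metric.isClosed_sphere.measurableSet] with ω hω
        exact hae ω hω
    _ = M1 * (2 * B * LF * |r - s|) := by rw [integral_const, smul_eq_mul, Measure.real, ← hM1]
    _ ≤ 2 * B * LF * M1 * |r - s| := le_of_eq (by ring)

end
end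

section
/- Let γ, γ₀ : ℝ³ → (0,1) with γ₀(p) = (e^{(p²−μ)/T}+1)^{−1}, and suppose (p²−μ)/(½ − γ(p)) = 2E(p)/tanh(E(p)/(2T)) where E(p) = √((p²−μ)² + |Δ(p)|²) ≥ |p²−μ|. Then (p²−μ)/(½ − γ₀(p)) ≤ (p²−μ)/(½ − γ(p)) for all p, with strict inequality wherever Δ(p) ≠ 0. -/
open Real Set in
lemma aux_sinh_lt_mul_cosh {u : ℝ} (hu : 0 < u) : Real.sinh u < u * Real.cosh u := by
  have h : StrictMonoOn (fun x => x * Real.cosh x - Real.sinh x) (Set.Ici 0) := by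
    apply strictMonoOn_of_deriv_pos (convex_Ici _)
    · exact ((continuous_id.mul Real.continuous_cosh).sub Real.continuous_sinh).continuousOn
    · intro x hx
      rw [interior_Ici, Set.mem_Ioi] at hx
      have hd : HasDerivAt (fun x => x * Real.cosh x - Real.sinh x) (x * Real.sinh x) x := by
        have h1 : HasDerivAt (fun x : ℝ => x * Real.cosh x)
            (1 * Real.cosh x + x * Real.sinh x) x :=
          (hasDerivAt_id x).mul (Real.hasDerivAt_cosh x)
        have h2 : HasDerivAt (fun x => x * Real.cosh x - Real.sinh x)
            (1 * Real.cosh x + x * Real.sinh x - Real.cosh x) x := h1.sub (Real.hasDerivAt_sinh x)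
        convert h2 using 1; ring
      rw [hd.deriv]
      exact mul_pos hx (Real.sinh_pos_iff.2 hx)
  have h2 := h (Set.self_mem_Ici) (Set.mem_Ici.2 hu.le) hu
  simp only [Real.sinh_zero, Real.cosh_zero, mul_one, zero_mul, sub_zero] at h2
  linarith

lemma aux_coth_mono : StrictMonoOn (fun u : ℝ => u * Real.cosh u / Real.sinh u) (Set.Ioi 0) := by
  apply strictMonoOn_of_deriv_pos (convex_Ioi _)
  · apply ContinuousOn.div
    · exact (continuous_id.mul Real.continuous_cosh).continuousOn
    · exact Real.continuous_sinh.continuousOn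
    · intro x hx; exact Real.sinh_ne_zero.2 (ne_of_gt hx)
  · intro x hx
    rw [interior_Ioi, Set.mem_Ioi] at hx
    have hs : Real.sinh x ≠ 0 := Real.sinh_ne_zero.2 hx.ne'
    have hd : HasDerivAt (fun u : ℝ => u * Real.cosh u / Real.sinh u)
        (((1 * Real.cosh x + x * Real.sinh x) * Real.sinh x -
          x * Real.cosh x * Real.cosh x) / (Real.sinh x) ^ 2) x :=
      ((hasDerivAt_id x).mul (Real.hasDerivAt_cosh x)).div (Real.hasDerivAt_sinh x) hs
    rw [hd.deriv]
    apply div_pos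
    · have h1 : Real.cosh x ^ 2 - Real.sinh x ^ 2 = 1 := Real.cosh_sq_sub_sinh_sq x
      have h2 : x < Real.sinh x * Real.cosh x := by
        have := Real.self_lt_sinh_iff.2 (mul_pos two_pos hx)
        rw [Real.sinh_two_mul] at this
        linarith
      nlinarith
    · positivity

lemma aux_one_lt_coth {u : ℝ} (hu : 0 < u) : 1 < u * Real.cosh u / Real.sinh u := by
  have hs : 0 < Real.sinh u := Real.sinh_pos_iff.2 hu
  rw [lt_div_iff₀ hs, one_mul]
  exact aux_sinh_lt_mul_cosh hu

lemma aux_f_eq (T x : ℝ) :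
    x / Real.tanh (x / (2 * T)) =
      2 * T * ((x / (2 * T)) * Real.cosh (x / (2 * T)) / Real.sinh (x / (2 * T))) := by
  rcases eq_or_ne T 0 with hT | hT
  · simp [hT]
  rcases eq_or_ne x 0 with hx | hx
  · simp [hx]
  have h2T : (2 : ℝ) * T ≠ 0 := by simp [hT]
  have hs : Real.sinh (x / (2 * T)) ≠ 0 := Real.sinh_ne_zero.2 (by simp [hx, h2T, div_eq_zero_iff])
  have hc : Real.cosh (x / (2 * T)) ≠ 0 := (Real.cosh_pos _).ne'
  rw [Real.tanh_eq_sinh_div_cosh]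
  field_simp

lemma aux_gt_2T {T x : ℝ} (hT : 0 < T) (hx : 0 < x) :
    2 * T < x / Real.tanh (x / (2 * T)) := by
  rw [aux_f_eq]
  have h : 0 < x / (2 * T) := by positivity
  nlinarith [aux_one_lt_coth h]

lemma aux_mono {T a b : ℝ} (hT : 0 < T) (ha : 0 < a) (hab : a < b) :
    a / Real.tanh (a / (2 * T)) < b / Real.tanh (b / (2 * T)) := by
  rw [aux_f_eq, aux_f_eq]
  have h1 : 0 < a / (2 * T) := by positivity
  have h2 : a / (2 * T) < b / (2 * T) := (div_lt_div_iff_of_pos_right (by positivity)).2 hab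
  have := aux_coth_mono (Set.mem_Ioi.2 h1) (Set.mem_Ioi.2 (h1.trans h2)) h2
  nlinarith

lemma aux_even (T x : ℝ) :
    x / Real.tanh (x / (2 * T)) = |x| / Real.tanh (|x| / (2 * T)) := by
  rcases abs_cases x with ⟨h, _⟩ | ⟨h, _⟩
  · rw [h]
  · rw [h, show (-x) / (2 * T) = -(x / (2 * T)) from neg_div _ _, Real.tanh_neg, neg_div_neg_eq]

/-- Let `γ₀` be the Fermi–Dirac distribution and `γ` satisfy
`(p²-μ)/(½-γ(p)) = 2E(p)/tanh(E(p)/(2T))` (stated multiplicatively so as to be meaningful also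
on the Fermi sphere), with `E(p) = √((p²-μ)² + |Δ(p)|²)`. Then
`(p²-μ)/(½-γ₀(p)) ≤ (p²-μ)/(½-γ(p))` for all `p`, with strict inequality wherever `Δ(p) ≠ 0`;
all quotients are interpreted via the coth formula `x ↦ x/tanh(x/(2T))` (value `2T` at `0`)
at the Fermi sphere. -/
theorem stmt17 (μ T : ℝ) (hT : 0 < T)
    (Δ : EuclideanSpace ℝ (Fin 3) → ℂ) (γ γ₀ : EuclideanSpace ℝ (Fin 3) → ℝ)
    (hγ₀ : ∀ p, γ₀ p = (Real.exp ((‖p‖ ^ 2 - μ) / T) + 1)⁻¹)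
    (hγr : ∀ p, γ p ∈ Set.Ioo (0 : ℝ) 1)
    (hγ : ∀ p, (1 / 2 - γ p) * (2 * Real.sqrt ((‖p‖ ^ 2 - μ) ^ 2 + ‖Δ p‖ ^ 2)) =
      (‖p‖ ^ 2 - μ) * Real.tanh (Real.sqrt ((‖p‖ ^ 2 - μ) ^ 2 + ‖Δ p‖ ^ 2) / (2 * T))) :
    ∀ p : EuclideanSpace ℝ (Fin 3),
      ((if ‖p‖ ^ 2 - μ = 0 then 2 * T
        else (‖p‖ ^ 2 - μ) / Real.tanh ((‖p‖ ^ 2 - μ) / (2 * T))) ≤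
       (if Real.sqrt ((‖p‖ ^ 2 - μ) ^ 2 + ‖Δ p‖ ^ 2) = 0 then 2 * T
        else Real.sqrt ((‖p‖ ^ 2 - μ) ^ 2 + ‖Δ p‖ ^ 2) /
          Real.tanh (Real.sqrt ((‖p‖ ^ 2 - μ) ^ 2 + ‖Δ p‖ ^ 2) / (2 * T)))) ∧
      (Δ p ≠ 0 →
       (if ‖p‖ ^ 2 - μ = 0 then 2 * T
        else (‖p‖ ^ 2 - μ) / Real.tanh ((‖p‖ ^ 2 - μ) / (2 * T))) <
       (Real.sqrt ((‖p‖ ^ 2 - μ) ^ 2 + ‖Δ p‖ ^ 2) /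
          Real.tanh (Real.sqrt ((‖p‖ ^ 2 - μ) ^ 2 + ‖Δ p‖ ^ 2) / (2 * T)))) ∧
      (‖p‖ ^ 2 ≠ μ →
        (‖p‖ ^ 2 - μ) / (1 / 2 - γ₀ p) =
          2 * ((‖p‖ ^ 2 - μ) / Real.tanh ((‖p‖ ^ 2 - μ) / (2 * T))) ∧
        (‖p‖ ^ 2 - μ) / (1 / 2 - γ p) =
          2 * (Real.sqrt ((‖p‖ ^ 2 - μ) ^ 2 + ‖Δ p‖ ^ 2) /
            Real.tanh (Real.sqrt ((‖p‖ ^ 2 - μ) ^ 2 + ‖Δ p‖ ^ 2) / (2 * T)))) := by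
  intro p
  have hgam := hγ p
  have hgam0 := hγ₀ p
  set x := ‖p‖ ^ 2 - μ with hxdef
  set E := Real.sqrt (x ^ 2 + ‖Δ p‖ ^ 2) with hEdef
  have hE0 : 0 ≤ E := Real.sqrt_nonneg _
  have habs : |x| ≤ E := by
    rw [← Real.sqrt_sq_eq_abs]
    exact Real.sqrt_le_sqrt (le_add_of_nonneg_right (by positivity))
  refine ⟨?_, ?_, ?_⟩
  · by_cases hx : x = 0
    · rw [if_pos hx]
      by_cases hE : E = 0
      · rw [if_pos hE]
      · rw [if_neg hE]
        exact (aux_gt_2T hT (lt_of_le_of_ne hE0 (Ne.symm hE))).le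
    · have hxp : 0 < |x| := abs_pos.2 hx
      have hE : E ≠ 0 := (lt_of_lt_of_le hxp habs).ne'
      rw [if_neg hx, if_neg hE, aux_even T x]
      rcases lt_or_eq_of_le habs with h | h
      · exact (aux_mono hT hxp h).le
      · rw [h]
  · intro hΔ
    have hD : 0 < ‖Δ p‖ ^ 2 := pow_pos (norm_pos_iff.2 hΔ) 2
    have hlt : |x| < E := by
      rw [← Real.sqrt_sq_eq_abs]
      exact Real.sqrt_lt_sqrt (sq_nonneg x) (by linarith)
    by_cases hx : x = 0
    · rw [if_pos hx]
      exact aux_gt_2T hT (lt_of_le_of_lt (abs_nonneg x) hlt)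
    · rw [if_neg hx, aux_even T x]
      exact aux_mono hT (abs_pos.2 hx) hlt
  · intro hμ
    have hx : x ≠ 0 := sub_ne_zero.2 hμ
    have h2T : (2 : ℝ) * T ≠ 0 := by positivity
    constructor
    · have htanh : Real.tanh (x / (2 * T)) ≠ 0 := by
        rw [Real.tanh_eq_sinh_div_cosh]
        exact div_ne_zero (Real.sinh_ne_zero.2 (div_ne_zero hx h2T)) (Real.cosh_pos _).ne'
      have hu : (0 : ℝ) < Real.exp (x / (2 * T)) := Real.exp_pos _
      have hxT : x / T = x / (2 * T) + x / (2 * T) := by field_simp; ring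
      have hkey : 1 / 2 - (Real.exp (x / T) + 1)⁻¹ = Real.tanh (x / (2 * T)) / 2 := by
        rw [hxT, Real.exp_add, Real.tanh_eq_sinh_div_cosh, Real.sinh_eq, Real.cosh_eq,
          Real.exp_neg]
        have h1 : Real.exp (x / (2 * T)) * Real.exp (x / (2 * T)) + 1 ≠ 0 := by positivity
        have h2 : Real.exp (x / (2 * T)) + (Real.exp (x / (2 * T)))⁻¹ ≠ 0 := by positivity
        field_simp
        ring
      rw [hgam0, hkey]
      field_simp
    · have hE : 0 < E := lt_of_lt_of_le (abs_pos.2 hx) habs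
      have htanh : Real.tanh (E / (2 * T)) ≠ 0 := by
        rw [Real.tanh_eq_sinh_div_cosh]
        exact div_ne_zero (Real.sinh_ne_zero.2 (div_ne_zero hE.ne' h2T)) (Real.cosh_pos _).ne'
      have h2 : 1 / 2 - γ p = x * Real.tanh (E / (2 * T)) / (2 * E) := by
        rw [eq_div_iff (by positivity)]
        linarith [hgam]
      rw [h2]
      field_simp
end
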